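/- arXiv:1610.01264 — 2 statements merged into one kernel-verified Lean document; each statement's English description precedes it below -/
import Mathlib

section
/- Let (A, m) be a Noetherian local ring, M a finitely generated A-module of dimension d, and x ∈ A an element such that dim(M/xM) = d - 1 (with d ≥ 1). Then dim Γ_x(M) < d, where Γ_x(M) is the x-power torsion submodule of M, and consequently dim(M/Γ_x(M)) = d. -/
open Pointwise

/-- The `x`-power torsion submodule `Γ_x(M) = {u ∈ M : x^j • u = 0 for some j}`. -/
noncomputable def xPowerTorsion {A : Type*} [CommRing A] (M : Type*) [AddCommGroup M]
    [Module A M] (x : A) : Submodule A M :=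
  ⨆ j : ℕ, Submodule.torsionBy A M (x ^ j)

/-- The dimension of a module: the Krull dimension of `A / Ann(M)`. -/
noncomputable def moduleDim (A : Type*) [CommRing A] (M : Type*) [AddCommGroup M]
    [Module A M] : WithBot ℕ∞ :=
  ringKrullDim (A ⧸ Module.annihilator A M)

section Aux

variable {A : Type*} [CommRing A]

/-- Spec of a quotient ring has the same Krull dimension as the zero locus subtype. -/
lemma ringKrullDim_quotient_eq' (I : Ideal A) :
    ringKrullDim (A ⧸ I) = Order.krullDim {p : PrimeSpectrum A // I ≤ p.asIdeal} := by
  apply le_antisymm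
  · apply Order.krullDim_le_of_strictMono
      (fun q : PrimeSpectrum (A ⧸ I) =>
        (⟨⟨q.asIdeal.comap (Ideal.Quotient.mk I), inferInstance⟩, fun a ha => by
          simp only [Ideal.mem_comap, Ideal.Quotient.eq_zero_iff_mem.mpr ha,
            Submodule.zero_mem]⟩ : {p : PrimeSpectrum A // I ≤ p.asIdeal}))
    apply Monotone.strictMono_of_injective
    · intro q q' h
      exact Subtype.mk_le_mk.mpr ((PrimeSpectrum.asIdeal_le_asIdeal _ _).mp
        (Ideal.comap_mono h))
    · intro q q' h
      apply PrimeSpectrum.ext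
      exact Ideal.comap_injective_of_surjective _ Ideal.Quotient.mk_surjective
        (congrArg (fun p => (Subtype.val p).asIdeal) h)
  · apply Order.krullDim_le_of_strictMono
      (fun p : {p : PrimeSpectrum A // I ≤ p.asIdeal} =>
        (⟨Ideal.map (Ideal.Quotient.mk I) p.1.asIdeal,
          Ideal.map_isPrime_of_surjective Ideal.Quotient.mk_surjective
            (by rw [Ideal.mk_ker]; exact p.2)⟩ : PrimeSpectrum (A ⧸ I)))
    have key : ∀ p : {p : PrimeSpectrum A // I ≤ p.asIdeal},
        Ideal.comap (Ideal.Quotient.mk I) (Ideal.map (Ideal.Quotient.mk I) p.1.asIdeal)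
          = p.1.asIdeal := by
      intro p
      rw [Ideal.comap_map_of_surjective _ Ideal.Quotient.mk_surjective]
      refine le_antisymm (sup_le le_rfl ?_) le_sup_left
      rw [← RingHom.ker_eq_comap_bot, Ideal.mk_ker]; exact p.2
    apply Monotone.strictMono_of_injective
    · intro p p' h
      exact (PrimeSpectrum.asIdeal_le_asIdeal _ _).mp (Ideal.map_mono h)
    · intro p p' h
      have h2 : Ideal.map (Ideal.Quotient.mk I) p.1.asIdeal
          = Ideal.map (Ideal.Quotient.mk I) p'.1.asIdeal :=
        congrArg PrimeSpectrum.asIdeal h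
      have h3 := congrArg (Ideal.comap (Ideal.Quotient.mk I)) h2
      rw [key p, key p'] at h3
      exact Subtype.ext (PrimeSpectrum.ext h3)

lemma krullDim_zeroLocus_mono {J K : Ideal A}
    (h : ∀ p : PrimeSpectrum A, J ≤ p.asIdeal → K ≤ p.asIdeal) :
    Order.krullDim {p : PrimeSpectrum A // J ≤ p.asIdeal}
      ≤ Order.krullDim {p : PrimeSpectrum A // K ≤ p.asIdeal} := by
  apply Order.krullDim_le_of_strictMono
    (fun p : {p : PrimeSpectrum A // J ≤ p.asIdeal} => (⟨p.1, h p.1 p.2⟩ :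
      {p : PrimeSpectrum A // K ≤ p.asIdeal}))
  intro p p' hpp'
  exact Subtype.mk_lt_mk.mpr (Subtype.coe_lt_coe.mpr hpp')

lemma moduleDim_eq_krullDim' (M : Type*) [AddCommGroup M]
    [Module A M] : moduleDim A M
      = Order.krullDim {p : PrimeSpectrum A // Module.annihilator A M ≤ p.asIdeal} :=
  ringKrullDim_quotient_eq' _

/-- If `Ann M ≤ p`, `x ∈ p`, `p` prime, `M` finite, then `Ann (M/xM) ≤ p`
(Cayley–Hamilton / determinant trick). -/
lemma ann_quot_smul_le_prime {M : Type*} [AddCommGroup M] [Module A M] [Module.Finite A M]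
    (x : A) (p : Ideal A) [hp : p.IsPrime]
    (hM : Module.annihilator A M ≤ p) (hxp : x ∈ p) :
    Module.annihilator A (M ⧸ (x • (⊤ : Submodule A M))) ≤ p := by
  intro a ha
  have haM : ∀ m : M, a • m ∈ x • (⊤ : Submodule A M) := by
    intro m
    have h0 := Module.mem_annihilator.mp ha (Submodule.Quotient.mk m)
    rwa [← Submodule.Quotient.mk_smul, Submodule.Quotient.mk_eq_zero] at h0
  obtain ⟨P, hmonic, -, hcoeff, heval⟩ :=
    LinearMap.exists_monic_and_coeff_mem_pow_and_aeval_eq_zero_of_range_le_smul A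
      (algebraMap A (Module.End A M) a) (Ideal.span {x}) (by
        rintro _ ⟨m, rfl⟩
        rw [Submodule.ideal_span_singleton_smul]
        simpa [Module.algebraMap_end_apply] using haM m)
  have hev : P.eval a ∈ Module.annihilator A M := by
    rw [Module.mem_annihilator]
    intro m
    have h1 : Polynomial.aeval (algebraMap A (Module.End A M) a) P
        = algebraMap A (Module.End A M) (P.eval a) := by
      rw [Polynomial.aeval_algebraMap_apply_eq_algebraMap_eval]
    rw [h1] at heval
    have := congrArg (fun φ : Module.End A M => φ m) heval
    simpa [Module.algebraMap_end_apply] using this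
  set n := P.natDegree with hn
  have hsum : P.eval a = ∑ i ∈ Finset.range (n + 1), P.coeff i * a ^ i :=
    Polynomial.eval_eq_sum_range' (Nat.lt_succ_self n) a
  have hpow : a ^ n ∈ p := by
    have h2 : a ^ n = P.eval a - ∑ i ∈ Finset.range n, P.coeff i * a ^ i := by
      rw [hsum, Finset.sum_range_succ, hmonic.coeff_natDegree, one_mul]
      ring
    rw [h2]
    apply Ideal.sub_mem
    · exact hM hev
    · apply Ideal.sum_mem
      intro i hi
      apply Ideal.mul_mem_right
      have hin : n - i ≠ 0 := Nat.sub_ne_zero_of_lt (Finset.mem_range.mp hi)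
      have : P.coeff i ∈ Ideal.span {x} :=
        Ideal.pow_le_self hin (hcoeff i)
      exact (Ideal.span_le.mpr (Set.singleton_subset_iff.mpr hxp)) this
  exact hp.mem_of_pow_mem n hpow

lemma exists_ltSeries_of_le_krullDim {α : Type*} [Preorder α] {d : ℕ}
    (h : (d : WithBot ℕ∞) ≤ Order.krullDim α) :
    ∃ q : LTSeries α, d ≤ q.length := by
  rcases Nat.eq_zero_or_pos d with hd0 | hd0
  · have hne : Nonempty α := by
      by_contra hem
      haveI := not_nonempty_iff.mp hem
      rw [Order.krullDim_eq_bot] at h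
      exact absurd h (by simp)
    exact ⟨RelSeries.singleton _ (Classical.arbitrary α), hd0 ▸ Nat.zero_le _⟩
  by_contra hcon
  push_neg at hcon
  have hb : Order.krullDim α ≤ ((d - 1 : ℕ) : WithBot ℕ∞) := by
    apply iSup_le
    intro q
    exact_mod_cast Nat.cast_le.mpr (Nat.le_sub_one_of_lt (hcon q))
  have hd' : (d : WithBot ℕ∞) ≤ ((d - 1 : ℕ) : WithBot ℕ∞) := le_trans h hb
  have : d ≤ d - 1 := by exact_mod_cast hd'
  omega

end Aux

/-- If `(A, 𝔪)` is Noetherian local, `M` a finitely generated `A`-module of dimension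
`d ≥ 1`, and `x ∈ A` satisfies `dim (M/xM) = d - 1`, then `dim Γ_x(M) < d` and
`dim (M / Γ_x(M)) = d`. -/
theorem dim_xPowerTorsion_lt {A : Type*} [CommRing A] [IsNoetherianRing A] [IsLocalRing A]
    (M : Type*) [AddCommGroup M] [Module A M] [Module.Finite A M]
    (d : ℕ) (hd : 1 ≤ d) (hdim : moduleDim A M = (d : WithBot ℕ∞)) (x : A)
    (hx : moduleDim A (M ⧸ (x • (⊤ : Submodule A M))) = ((d - 1 : ℕ) : WithBot ℕ∞)) :
    moduleDim A (xPowerTorsion M x) < (d : WithBot ℕ∞) ∧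
      moduleDim A (M ⧸ xPowerTorsion M x) = (d : WithBot ℕ∞) := by
  classical
  set Γ := xPowerTorsion M x with hΓ
  -- Step 1: the torsion chain stabilizes.
  have hNoeth : IsNoetherian A M := inferInstance
  obtain ⟨n, hn⟩ := monotone_stabilizes_iff_noetherian.mpr hNoeth
    ⟨fun j => Submodule.torsionBy A M (x ^ j),
      fun i j hij => Submodule.torsionBy_le_torsionBy_of_dvd _ _ (pow_dvd_pow x hij)⟩
  have hΓle : Γ ≤ Submodule.torsionBy A M (x ^ n) := by
    rw [hΓ, xPowerTorsion]
    apply iSup_le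
    intro j
    rcases le_total j n with hj | hj
    · exact Submodule.torsionBy_le_torsionBy_of_dvd _ _ (pow_dvd_pow x hj)
    · exact le_of_eq (hn j hj).symm
  -- Step 2: annihilator facts.
  have hxn : x ^ n ∈ Module.annihilator A ↥Γ := by
    rw [Module.mem_annihilator]
    intro u
    ext
    exact (Submodule.mem_torsionBy_iff _ _).mp (hΓle u.2)
  have hMΓ : Module.annihilator A M ≤ Module.annihilator A ↥Γ := by
    intro a ha
    rw [Module.mem_annihilator] at ha ⊢
    intro u
    ext
    exact ha u.1
  have hMQ : Module.annihilator A M ≤ Module.annihilator A (M ⧸ Γ) := by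
    intro a ha
    rw [Module.mem_annihilator] at ha ⊢
    intro u
    obtain ⟨m, rfl⟩ := Submodule.Quotient.mk_surjective Γ u
    rw [← Submodule.Quotient.mk_smul, ha m, Submodule.Quotient.mk_zero]
  have hprod : Module.annihilator A ↥Γ * Module.annihilator A (M ⧸ Γ)
      ≤ Module.annihilator A M := by
    rw [Ideal.mul_le]
    intro b hb c hc
    rw [Module.mem_annihilator]
    intro m
    have hcm : c • m ∈ Γ := by
      have h0 := Module.mem_annihilator.mp hc (Submodule.Quotient.mk m)
      rwa [← Submodule.Quotient.mk_smul, Submodule.Quotient.mk_eq_zero] at h0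
    have h1 := Module.mem_annihilator.mp hb ⟨c • m, hcm⟩
    have h2 : b • (c • m) = 0 := congrArg Subtype.val h1
    rw [mul_smul]
    exact h2
  -- Step 3: primes over Ann Γ are over Ann (M/xM).
  have hkey : ∀ p : PrimeSpectrum A, Module.annihilator A ↥Γ ≤ p.asIdeal →
      Module.annihilator A (M ⧸ (x • (⊤ : Submodule A M))) ≤ p.asIdeal := by
    intro p hp
    have hMp : Module.annihilator A M ≤ p.asIdeal := le_trans hMΓ hp
    have hxp : x ∈ p.asIdeal := p.isPrime.mem_of_pow_mem n (hp hxn)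
    exact ann_quot_smul_le_prime x p.asIdeal hMp hxp
  -- Part 1: dim Γ < d.
  have hdimΓ : moduleDim A ↥Γ ≤ ((d - 1 : ℕ) : WithBot ℕ∞) := by
    rw [moduleDim_eq_krullDim']
    calc Order.krullDim {p : PrimeSpectrum A // Module.annihilator A ↥Γ ≤ p.asIdeal}
        ≤ Order.krullDim {p : PrimeSpectrum A //
            Module.annihilator A (M ⧸ (x • (⊤ : Submodule A M))) ≤ p.asIdeal} :=
          krullDim_zeroLocus_mono hkey
      _ = ((d - 1 : ℕ) : WithBot ℕ∞) := by rw [← moduleDim_eq_krullDim', hx]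
  have hlt : ((d - 1 : ℕ) : WithBot ℕ∞) < (d : WithBot ℕ∞) := by
    exact_mod_cast Nat.sub_lt hd one_pos
  have part1 : moduleDim A ↥Γ < (d : WithBot ℕ∞) := lt_of_le_of_lt hdimΓ hlt
  refine ⟨part1, ?_⟩
  -- Part 2: dim (M/Γ) = d.
  have hle : moduleDim A (M ⧸ Γ) ≤ (d : WithBot ℕ∞) := by
    rw [moduleDim_eq_krullDim', ← hdim, moduleDim_eq_krullDim']
    exact krullDim_zeroLocus_mono (fun p hp => le_trans hMQ hp)
  refine le_antisymm hle ?_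
  -- find a chain of length ≥ d over Ann M
  obtain ⟨q, hq⟩ := exists_ltSeries_of_le_krullDim (α :=
    {p : PrimeSpectrum A // Module.annihilator A M ≤ p.asIdeal}) (d := d)
    (by rw [← moduleDim_eq_krullDim', hdim])
  -- the bottom of the chain contains Ann Γ or Ann (M/Γ)
  have hhead : Module.annihilator A ↥Γ ≤ q.head.1.asIdeal ∨
      Module.annihilator A (M ⧸ Γ) ≤ q.head.1.asIdeal :=
    q.head.1.isPrime.mul_le.mp (le_trans hprod q.head.2)
  have hheadQ : Module.annihilator A (M ⧸ Γ) ≤ q.head.1.asIdeal := by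
    rcases hhead with h | h
    · exfalso
      -- then the whole chain lies over Ann Γ, contradicting dim Γ < d
      let chain : LTSeries {p : PrimeSpectrum A // Module.annihilator A ↥Γ ≤ p.asIdeal} :=
        ⟨q.length, fun i => ⟨(q i).1,
          le_trans h ((q.monotone (Fin.zero_le i)) : q.head ≤ q i)⟩,
          fun i => q.step i⟩
      have hlen : (d : WithBot ℕ∞) ≤ Order.krullDim
          {p : PrimeSpectrum A // Module.annihilator A ↥Γ ≤ p.asIdeal} := by
        refine le_trans ?_ (Order.LTSeries.length_le_krullDim chain)
        have hq2 : d ≤ chain.length := hq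
        exact_mod_cast Nat.cast_le.mpr hq2
      rw [← moduleDim_eq_krullDim'] at hlen
      exact absurd (lt_of_le_of_lt hlen part1) (lt_irrefl _)
    · exact h
  let chain : LTSeries {p : PrimeSpectrum A // Module.annihilator A (M ⧸ Γ) ≤ p.asIdeal} :=
    ⟨q.length, fun i => ⟨(q i).1,
      le_trans hheadQ ((q.monotone (Fin.zero_le i)) : q.head ≤ q i)⟩,
      fun i => q.step i⟩
  rw [moduleDim_eq_krullDim']
  refine le_trans ?_ (Order.LTSeries.length_le_krullDim chain)
  have hq2 : d ≤ chain.length := hq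
  exact_mod_cast Nat.cast_le.mpr hq2
end

section
/- The ring A = L[[X,Y]]/(X^2 + XY + Y^2), where L = F_2(t) is the rational function field over the field with two elements, is a one-dimensional Noetherian local domain. -/
/-- `L = 𝔽₂(t)`, the rational function field over the field with two elements. -/
abbrev Lfield : Type := RatFunc (ZMod 2)

/-- The power series `X² + XY + Y²` in `L[[X, Y]]`. -/
noncomputable def quadricElt : MvPowerSeries (Fin 2) Lfield :=
  MvPowerSeries.X 0 ^ 2 + MvPowerSeries.X 0 * MvPowerSeries.X 1 + MvPowerSeries.X 1 ^ 2

/-- `A = L[[X, Y]]/(X² + XY + Y²)`. -/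
abbrev quadricRing : Type :=
  MvPowerSeries (Fin 2) Lfield ⧸ Ideal.span {quadricElt}

noncomputable section
open MvPowerSeries Finsupp
namespace QuadricAux


abbrev L := Lfield
abbrev R2 := MvPowerSeries (Fin 2) Lfield
abbrev S := PowerSeries Lfield

def E (m n : ℕ) : Fin 2 →₀ ℕ := Finsupp.single 0 m + Finsupp.single 1 n

@[simp] lemma E_apply0 (m n : ℕ) : E m n 0 = m := by simp [E, Finsupp.single_apply]
@[simp] lemma E_apply1 (m n : ℕ) : E m n 1 = n := by simp [E, Finsupp.single_apply]

lemma eq_E (d : Fin 2 →₀ ℕ) : d = E (d 0) (d 1) := by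
  ext i
  fin_cases i <;> simp [E, Finsupp.single_apply]

lemma E_le {a b m n : ℕ} : E a b ≤ E m n ↔ a ≤ m ∧ b ≤ n := by
  rw [Finsupp.le_def]
  rw [Fin.forall_fin_two]
  simp

lemma E_sub (m n a b : ℕ) : E m n - E a b = E (m - a) (n - b) := by
  ext i
  fin_cases i <;> simp [Finsupp.tsub_apply]

lemma E_eq_iff {m n a b : ℕ} : E m n = E a b ↔ m = a ∧ n = b := by
  constructor
  · intro h
    exact ⟨by simpa using congrArg (fun f => f 0) h, by simpa using congrArg (fun f => f 1) h⟩
  · rintro ⟨rfl, rfl⟩; rfl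

lemma E_zero : E 0 0 = 0 := by ext i; fin_cases i <;> simp

lemma eq_zero_iff (d : Fin 2 →₀ ℕ) : d = 0 ↔ d 0 = 0 ∧ d 1 = 0 := by
  constructor
  · rintro rfl; simp
  · rintro ⟨h0, h1⟩; rw [eq_E d, h0, h1, E_zero]

lemma single_one_eq (k : ℕ) : Finsupp.single (1 : Fin 2) k = E 0 k := by
  ext i; fin_cases i <;> simp [E, Finsupp.single_apply]

lemma single_zero_eq (k : ℕ) : Finsupp.single (0 : Fin 2) k = E k 0 := by
  ext i; fin_cases i <;> simp [E, Finsupp.single_apply]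

lemma quadricElt_eq : quadricElt =
    monomial (E 2 0) 1 + monomial (E 1 1) 1 + monomial (E 0 2) 1 := by
  rw [quadricElt, X_pow_eq, X_pow_eq, X_def, X_def, monomial_mul_monomial, one_mul,
    single_zero_eq 2, single_one_eq 2]
  rfl

lemma coeff_mul_f (g : R2) (m n : ℕ) :
    coeff (E m n) (g * quadricElt) =
      (if 2 ≤ m then coeff (E (m - 2) n) g else 0) +
      (if 1 ≤ m ∧ 1 ≤ n then coeff (E (m - 1) (n - 1)) g else 0) +
      (if 2 ≤ n then coeff (E m (n - 2)) g else 0) := by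
  rw [quadricElt_eq, mul_add, mul_add, map_add, map_add,
    coeff_mul_monomial, coeff_mul_monomial, coeff_mul_monomial]
  simp only [E_le, E_sub, mul_one]
  congr 1
  · congr 1
    · simp
  · simp

def phiFun (s : S) : R2 := fun d => if d 0 = 0 then PowerSeries.coeff (d 1) s else 0

lemma coeff_phiFun (s : S) (d : Fin 2 →₀ ℕ) :
    coeff d (phiFun s) = if d 0 = 0 then PowerSeries.coeff (d 1) s else 0 := rfl

def phi : S →+* R2 :=
  RingHom.mk'
    { toFun := phiFun
      map_one' := by
        apply MvPowerSeries.ext; intro d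
        rw [coeff_phiFun, MvPowerSeries.coeff_one]
        simp only [eq_zero_iff]
        by_cases h0 : d 0 = 0 <;> by_cases h1 : d 1 = 0 <;>
          simp [h0, h1, PowerSeries.coeff_one]
      map_mul' := by
        intro s t
        apply MvPowerSeries.ext; intro d
        rw [MvPowerSeries.coeff_mul, coeff_phiFun]
        by_cases h0 : d 0 = 0
        · have hd : d = Finsupp.single 1 (d 1) := by
            ext i; fin_cases i <;> simp [h0, Finsupp.single_apply]
          rw [if_pos h0, PowerSeries.coeff_mul]
          conv_rhs => rw [hd, Finsupp.antidiagonal_single, Finset.sum_map]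
          apply Finset.sum_congr rfl
          intro p _
          simp [coeff_phiFun, Finsupp.single_apply]
        · rw [if_neg h0]
          symm
          apply Finset.sum_eq_zero
          intro p hp
          rw [Finset.HasAntidiagonal.mem_antidiagonal] at hp
          have : p.1 0 + p.2 0 = d 0 := by rw [← hp]; simp
          by_cases hp1 : p.1 0 = 0
          · have hp2 : p.2 0 ≠ 0 := by omega
            simp [coeff_phiFun, hp2]
          · simp [coeff_phiFun, hp1] }
    (by
      intro s t
      apply MvPowerSeries.ext; intro d
      simp only [MonoidHom.coe_mk, OneHom.coe_mk, map_add]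
      rw [coeff_phiFun, coeff_phiFun, coeff_phiFun, map_add]
      split <;> simp)

lemma coeff_phi (s : S) (d : Fin 2 →₀ ℕ) :
    coeff d (phi s) = if d 0 = 0 then PowerSeries.coeff (d 1) s else 0 := rfl

lemma coeff_phi_E (s : S) (m n : ℕ) :
    coeff (E m n) (phi s) = if m = 0 then PowerSeries.coeff n s else 0 := by
  rw [coeff_phi]; simp

lemma phi_X : phi PowerSeries.X = MvPowerSeries.X 1 := by
  apply MvPowerSeries.ext; intro d
  rw [coeff_phi, MvPowerSeries.coeff_X, PowerSeries.coeff_X]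
  by_cases h0 : d 0 = 0 <;> by_cases h1 : d 1 = 1
  · rw [if_pos h0, if_pos h1, if_pos]
    rw [eq_E d, h0, h1, single_one_eq]
  · rw [if_pos h0, if_neg h1, if_neg]
    intro h
    exact h1 (by simpa using congrArg (fun f => f 1) h)
  · rw [if_neg h0, if_neg]
    intro h
    exact h0 (by simpa [Finsupp.single_apply] using congrArg (fun f => f 0) h)
  · rw [if_neg h0, if_neg]
    intro h
    exact h0 (by simpa [Finsupp.single_apply] using congrArg (fun f => f 0) h)

lemma phi_C (a : L) : phi (PowerSeries.C a) = MvPowerSeries.C (σ := Fin 2) a := by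
  apply MvPowerSeries.ext; intro d
  rw [coeff_phi, MvPowerSeries.coeff_C, PowerSeries.coeff_C]
  simp only [eq_zero_iff]
  by_cases h0 : d 0 = 0 <;> by_cases h1 : d 1 = 0 <;> simp [h0, h1]


-- division section (to be appended inside namespace)
section Division

def Qaux (h : R2) : ℕ → (ℕ → L) × (ℕ → L)
  | 0 => (fun m => coeff (E (m + 2) 0) h,
          fun m => coeff (E (m + 2) 1) h - coeff (E (m + 3) 0) h)
  | n + 1 => ((Qaux h n).2,
      fun m => coeff (E (m + 2) (n + 2)) h - (Qaux h n).2 (m + 1) - (Qaux h n).1 (m + 2))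

def Qc (h : R2) (m n : ℕ) : L := (Qaux h n).1 m

lemma Qc_zero (h : R2) (m : ℕ) : Qc h m 0 = coeff (E (m + 2) 0) h := rfl

lemma Qc_one (h : R2) (m : ℕ) :
    Qc h m 1 = coeff (E (m + 2) 1) h - Qc h (m + 1) 0 := rfl

lemma Qc_succ (h : R2) (m n : ℕ) :
    Qc h m (n + 2) = coeff (E (m + 2) (n + 2)) h - Qc h (m + 1) (n + 1) - Qc h (m + 2) n := rfl

def qdiv (h : R2) : R2 := fun d => Qc h (d 0) (d 1)

lemma coeff_qdiv (h : R2) (d : Fin 2 →₀ ℕ) : coeff d (qdiv h) = Qc h (d 0) (d 1) := rfl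

lemma coeff_qdiv_E (h : R2) (m n : ℕ) : coeff (E m n) (qdiv h) = Qc h m n := by
  rw [coeff_qdiv]; simp

lemma coeff_qdiv_mul (h : R2) (m n : ℕ) :
    coeff (E (m + 2) n) (qdiv h * quadricElt) = coeff (E (m + 2) n) h := by
  rw [coeff_mul_f]
  have h2 : (2 : ℕ) ≤ m + 2 := by omega
  rw [if_pos h2]
  have e1 : m + 2 - 2 = m := by omega
  have e2 : m + 2 - 1 = m + 1 := by omega
  rw [e1, e2]
  match n with
  | 0 =>
    rw [if_neg (by omega), if_neg (by omega), coeff_qdiv_E, Qc_zero]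
    ring
  | 1 =>
    rw [if_pos ⟨by omega, by omega⟩, if_neg (by omega), coeff_qdiv_E, coeff_qdiv_E, Qc_one]
    ring
  | (n + 2) =>
    rw [if_pos ⟨by omega, by omega⟩, if_pos (by omega)]
    have e3 : n + 2 - 1 = n + 1 := by omega
    have e4 : n + 2 - 2 = n := by omega
    rw [e3, e4, coeff_qdiv_E, coeff_qdiv_E, coeff_qdiv_E, Qc_succ]
    ring

def rdiv (h : R2) : R2 := h - qdiv h * quadricElt

def cdiv (h : R2) : S := PowerSeries.mk fun n => coeff (E 0 n) (rdiv h)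

def ddiv (h : R2) : S := PowerSeries.mk fun n => coeff (E 1 n) (rdiv h)

lemma coeff_rdiv_vanish (h : R2) (m n : ℕ) : coeff (E (m + 2) n) (rdiv h) = 0 := by
  rw [rdiv, map_sub, coeff_qdiv_mul, sub_self]

lemma hX0 : (MvPowerSeries.X 0 : R2) = monomial (E 1 0) 1 := by
  rw [X_def, single_zero_eq]

lemma rdiv_eq (h : R2) : rdiv h = phi (cdiv h) + phi (ddiv h) * MvPowerSeries.X 0 := by
  apply MvPowerSeries.ext; intro d
  rw [eq_E d]
  set m := d 0; set n := d 1
  rw [map_add, coeff_phi_E, hX0, coeff_mul_monomial]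
  simp only [E_le, E_sub, mul_one]
  match m with
  | 0 =>
    rw [if_pos rfl, if_neg (by omega)]
    simp [cdiv]
  | 1 =>
    rw [if_neg (by omega), if_pos ⟨le_refl 1, by omega⟩, coeff_phi_E, if_pos rfl]
    simp [ddiv]
  | (m + 2) =>
    rw [if_neg (by omega), if_pos ⟨by omega, by omega⟩, coeff_phi_E,
      if_neg (by omega), coeff_rdiv_vanish]
    simp

theorem division (h : R2) :
    ∃ (q : R2) (c d : S), h = q * quadricElt + phi c + phi d * MvPowerSeries.X 0 := by
  refine ⟨qdiv h, cdiv h, ddiv h, ?_⟩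
  have k := rdiv_eq h
  have hr : rdiv h = h - qdiv h * quadricElt := rfl
  linear_combination k - hr

theorem division_unique (c d : S) (q : R2)
    (h : phi c + phi d * MvPowerSeries.X 0 = q * quadricElt) : c = 0 ∧ d = 0 := by
  have hcoeff : ∀ m n : ℕ, coeff (E (m + 2) n) (q * quadricElt) = 0 := by
    intro m n
    rw [← h, map_add, coeff_phi_E, if_neg (by omega), hX0, coeff_mul_monomial]
    simp only [E_le, E_sub, mul_one]
    rw [if_pos ⟨by omega, by omega⟩, coeff_phi_E, if_neg (by omega)]
    ring
  have key : ∀ n m : ℕ, coeff (E m n) q = 0 := by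
    intro n
    induction n using Nat.strong_induction_on with
    | _ n IH =>
      intro m
      have h0 := hcoeff m n
      rw [coeff_mul_f, if_pos (by omega : (2:ℕ) ≤ m + 2)] at h0
      have e1 : m + 2 - 2 = m := by omega
      have e2 : m + 2 - 1 = m + 1 := by omega
      rw [e1, e2] at h0
      match n, h0 with
      | 0, h0 =>
        rw [if_neg (by omega), if_neg (by omega)] at h0
        simpa using h0
      | 1, h0 =>
        rw [if_pos ⟨by omega, by omega⟩, if_neg (by omega), IH 0 (by omega)] at h0
        simpa using h0
      | (n + 2), h0 =>
        rw [if_pos ⟨by omega, by omega⟩, if_pos (by omega),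
          (by omega : n + 2 - 1 = n + 1), (by omega : n + 2 - 2 = n),
          IH (n + 1) (by omega), IH n (by omega)] at h0
        simpa using h0
  have hq : q = 0 := by
    apply MvPowerSeries.ext; intro d
    rw [eq_E d, key]
    simp
  rw [hq, zero_mul] at h
  constructor
  · apply PowerSeries.ext; intro n
    have hco := congrArg (coeff (E 0 n)) h
    rw [map_add, coeff_phi_E, if_pos rfl, hX0, coeff_mul_monomial] at hco
    simp only [E_le, E_sub, mul_one] at hco
    rw [if_neg (by omega)] at hco
    simpa using hco
  · apply PowerSeries.ext; intro n
    have hco := congrArg (coeff (E 1 n)) h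
    rw [map_add, coeff_phi_E, if_neg (by omega), hX0, coeff_mul_monomial] at hco
    simp only [E_le, E_sub, mul_one] at hco
    rw [if_pos ⟨le_refl 1, by omega⟩, coeff_phi_E, if_pos rfl] at hco
    simpa using hco

end Division

section QuotientLevel

def quadricRing' : Type := MvPowerSeries (Fin 2) Lfield ⧸ Ideal.span {quadricElt}

def piQ : R2 →+* (MvPowerSeries (Fin 2) Lfield ⧸ Ideal.span {quadricElt}) :=
  Ideal.Quotient.mk _

def psi : S →+* (MvPowerSeries (Fin 2) Lfield ⧸ Ideal.span {quadricElt}) := piQ.comp phi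

def xA : MvPowerSeries (Fin 2) Lfield ⧸ Ideal.span {quadricElt} := piQ (MvPowerSeries.X 0)

def yA : MvPowerSeries (Fin 2) Lfield ⧸ Ideal.span {quadricElt} := piQ (MvPowerSeries.X 1)

lemma piQ_quadric : piQ quadricElt = 0 :=
  Ideal.Quotient.eq_zero_iff_mem.mpr (Ideal.subset_span rfl)

lemma hrel : xA ^ 2 + xA * yA + yA ^ 2 = 0 := by
  have h : piQ (MvPowerSeries.X 0 ^ 2 + MvPowerSeries.X 0 * MvPowerSeries.X 1
      + MvPowerSeries.X 1 ^ 2) = 0 := piQ_quadric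
  simpa [xA, yA, map_add, map_mul, map_pow] using h

lemma psi_X : psi PowerSeries.X = yA := by
  rw [psi, RingHom.comp_apply, phi_X]; rfl

lemma reprA (a : MvPowerSeries (Fin 2) Lfield ⧸ Ideal.span {quadricElt}) :
    ∃ c d : S, a = psi c + psi d * xA := by
  obtain ⟨h, rfl⟩ : ∃ h, piQ h = a := Ideal.Quotient.mk_surjective a
  obtain ⟨q, c, d, hq⟩ := division h
  refine ⟨c, d, ?_⟩
  rw [hq]
  rw [map_add, map_add, map_mul, map_mul, piQ_quadric, mul_zero, zero_add]
  rfl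

lemma uniqueA (c d : S) (h : psi c + psi d * xA = 0) : c = 0 ∧ d = 0 := by
  have hmem : phi c + phi d * MvPowerSeries.X 0 ∈ Ideal.span {quadricElt} := by
    rw [← Ideal.Quotient.eq_zero_iff_mem]
    have : piQ (phi c + phi d * MvPowerSeries.X 0) = psi c + psi d * xA := by
      rw [map_add, map_mul]; rfl
    rw [show Ideal.Quotient.mk (Ideal.span {quadricElt}) (phi c + phi d * MvPowerSeries.X 0)
        = piQ (phi c + phi d * MvPowerSeries.X 0) from rfl, this, h]
  obtain ⟨q, hq⟩ := Ideal.mem_span_singleton'.mp hmem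
  exact division_unique c d q hq.symm

lemma mulruleA (c₁ d₁ c₂ d₂ : S) :
    (psi c₁ + psi d₁ * xA) * (psi c₂ + psi d₂ * xA) =
      psi (c₁ * c₂ - d₁ * d₂ * PowerSeries.X ^ 2) +
        psi (c₁ * d₂ + c₂ * d₁ - d₁ * d₂ * PowerSeries.X) * xA := by
  simp only [map_sub, map_add, map_mul, map_pow, psi_X]
  linear_combination (psi d₁ * psi d₂) * hrel

def Nr (c d : S) : S := c ^ 2 - c * d * PowerSeries.X + d ^ 2 * PowerSeries.X ^ 2

lemma Nr_mul (c₁ d₁ c₂ d₂ : S) :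
    Nr (c₁ * c₂ - d₁ * d₂ * PowerSeries.X ^ 2) (c₁ * d₂ + c₂ * d₁ - d₁ * d₂ * PowerSeries.X) =
      Nr c₁ d₁ * Nr c₂ d₂ := by
  unfold Nr; ring

lemma char_two : (2 : Lfield) = 0 := by
  haveI : CharP Lfield 2 :=
    charP_of_injective_algebraMap' (ZMod 2) (A := Lfield) 2
  exact_mod_cast CharP.cast_eq_zero Lfield 2

lemma no_root (z : Lfield) : z ^ 2 - z + 1 ≠ 0 := by
  intro hz
  have hint : IsIntegral (Polynomial (ZMod 2)) z := by
    refine ⟨Polynomial.X ^ 2 + Polynomial.X + 1, ?_, ?_⟩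
    · have h1 : ((Polynomial.X + 1 : Polynomial (Polynomial (ZMod 2)))).degree < ((2 : ℕ) : WithBot ℕ) := by
        refine lt_of_le_of_lt (Polynomial.degree_add_le _ _) ?_
        rw [Polynomial.degree_one, Polynomial.degree_X]
        decide
      have hm := Polynomial.monic_X_pow_add h1
      rw [add_assoc]
      exact hm
    · simp only [Polynomial.eval₂_add, Polynomial.eval₂_pow,
        Polynomial.eval₂_X, Polynomial.eval₂_one]
      linear_combination hz + z * char_two
  obtain ⟨p, hp⟩ := IsIntegrallyClosed.isIntegral_iff.mp hint
  have hinj := IsFractionRing.injective (Polynomial (ZMod 2)) Lfield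
  have hp0 : p ^ 2 + p + 1 = 0 := by
    apply hinj
    rw [map_add, map_add, map_pow, hp, map_one, map_zero]
    linear_combination hz + z * char_two
  have hu : IsUnit p := IsUnit.of_mul_eq_one (-(p + 1)) (by linear_combination -hp0)
  obtain ⟨a, _, rfl⟩ := Polynomial.isUnit_iff.mp hu
  have hC : Polynomial.C (a ^ 2 + a + 1) = (0 : Polynomial (ZMod 2)) := by
    rw [map_add, map_add, map_pow, map_one]
    exact hp0
  have ha : (a ^ 2 + a + 1 : ZMod 2) = 0 := Polynomial.C_eq_zero.mp hC
  have : ∀ b : ZMod 2, b ^ 2 + b + 1 ≠ 0 := by decide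
  exact this a ha

lemma unit_constantCoeff_ne (u : Sˣ) : PowerSeries.constantCoeff (u : S) ≠ 0 := by
  have : IsUnit (PowerSeries.constantCoeff (u : S)) :=
    (PowerSeries.constantCoeff (R := Lfield)).isUnit_map u.isUnit
  exact this.ne_zero

lemma Nr_eq_zero {c d : S} (h : Nr c d = 0) : c = 0 ∧ d = 0 := by
  by_cases hc : c = 0
  · subst hc
    rw [Nr] at h
    simp only [zero_pow, zero_mul, sub_zero, zero_sub, neg_eq_zero, zero_add] at h
    have : d ^ 2 * PowerSeries.X ^ 2 = 0 := by simpa [Nr] using h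
    have hd : d = 0 := by
      rcases mul_eq_zero.mp this with h' | h'
      · exact pow_eq_zero_iff (n := 2) (by norm_num) |>.mp h'
      · exact absurd (pow_eq_zero_iff (n := 2) (by norm_num) |>.mp h') PowerSeries.X_ne_zero
    exact ⟨rfl, hd⟩
  by_cases hd : d = 0
  · subst hd
    rw [Nr] at h
    simp only [mul_zero, zero_mul, sub_zero, zero_pow, add_zero] at h
    have : c = 0 := pow_eq_zero_iff (n := 2) (by norm_num) |>.mp (by simpa using h)
    exact absurd this hc
  exfalso
  obtain ⟨a, u, hcu⟩ := IsDiscreteValuationRing.eq_unit_mul_pow_irreducible hc PowerSeries.X_irreducible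
  obtain ⟨b, v, hdv⟩ := IsDiscreteValuationRing.eq_unit_mul_pow_irreducible hd PowerSeries.X_irreducible
  rw [Nr, hcu, hdv] at h
  have hexp : (u : S) ^ 2 * PowerSeries.X ^ (2 * a) - (u : S) * (v : S) * PowerSeries.X ^ (a + b + 1)
      + (v : S) ^ 2 * PowerSeries.X ^ (2 * b + 2) = 0 := by
    rw [← h]; ring
  set u0 := PowerSeries.constantCoeff (u : S) with hu0
  set v0 := PowerSeries.constantCoeff (v : S) with hv0
  have hu0ne : u0 ≠ 0 := unit_constantCoeff_ne u
  have hv0ne : v0 ≠ 0 := unit_constantCoeff_ne v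
  have coeff_term : ∀ (w : S) (k N : ℕ), PowerSeries.coeff N (w * PowerSeries.X ^ k) =
      if k ≤ N then PowerSeries.coeff (N - k) w else 0 := by
    intro w k N
    exact PowerSeries.coeff_mul_X_pow' w k N
  rcases lt_trichotomy a (b + 1) with hab | hab | hab
  · have := congrArg (PowerSeries.coeff (2 * a)) hexp
    rw [map_add, map_sub, coeff_term, coeff_term, coeff_term,
      if_pos (le_refl _), if_neg (by omega), if_neg (by omega)] at this
    simp only [Nat.sub_self, map_zero, sub_zero, add_zero] at this
    have : u0 ^ 2 = 0 := by
      rw [hu0]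
      rw [← map_pow]
      simpa using this
    exact hu0ne (pow_eq_zero_iff (n := 2) (by norm_num) |>.mp this)
  · have := congrArg (PowerSeries.coeff (2 * a)) hexp
    have e1 : a + b + 1 = 2 * a := by omega
    have e2 : 2 * b + 2 = 2 * a := by omega
    rw [e1, e2] at this
    rw [map_add, map_sub, coeff_term, coeff_term, coeff_term,
      if_pos (le_refl _), if_pos (le_refl _), if_pos (le_refl _)] at this
    simp only [Nat.sub_self, map_zero] at this
    have hc0 : u0 ^ 2 - u0 * v0 + v0 ^ 2 = 0 := by
      simpa only [PowerSeries.coeff_zero_eq_constantCoeff, map_pow, map_mul, hu0, hv0] using this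
    have hz := no_root (u0 * v0⁻¹)
    apply hz
    have hv2 : v0 ^ 2 ≠ 0 := pow_ne_zero _ hv0ne
    have expand : ((u0 * v0⁻¹) ^ 2 - u0 * v0⁻¹ + 1) * v0 ^ 2 = u0 ^ 2 - u0 * v0 + v0 ^ 2 := by
      field_simp
    have h2 : ((u0 * v0⁻¹) ^ 2 - u0 * v0⁻¹ + 1) * v0 ^ 2 = 0 := by rw [expand, hc0]
    rcases mul_eq_zero.mp h2 with h3 | h3
    · exact h3
    · exact absurd h3 hv2
  · have := congrArg (PowerSeries.coeff (2 * b + 2)) hexp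
    rw [map_add, map_sub, coeff_term, coeff_term, coeff_term,
      if_neg (by omega), if_neg (by omega), if_pos (le_refl _)] at this
    simp only [Nat.sub_self, map_zero, zero_sub, neg_zero, zero_add] at this
    have : v0 ^ 2 = 0 := by
      rw [hv0, ← map_pow]
      simpa using this
    exact hv0ne (pow_eq_zero_iff (n := 2) (by norm_num) |>.mp this)

end QuotientLevel

section Main

lemma conjA (c d : S) :
    (psi c + psi d * xA) * (psi (c - d * PowerSeries.X) - psi d * xA) = psi (Nr c d) := by
  have h := mulruleA c d (c - d * PowerSeries.X) (-d)
  have e1 : c * (c - d * PowerSeries.X) - d * (-d) * PowerSeries.X ^ 2 = Nr c d := by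
    rw [Nr]; ring
  have e2 : c * (-d) + (c - d * PowerSeries.X) * d - d * (-d) * PowerSeries.X = 0 := by ring
  rw [e1, e2, map_zero, zero_mul, add_zero] at h
  rw [← h, map_neg]
  ring

lemma xA_ne_zero : xA ≠ 0 := by
  intro h
  have h1 : psi 0 + psi 1 * xA = 0 := by
    rw [h, map_zero, map_one, zero_add, mul_zero]
  exact one_ne_zero (uniqueA 0 1 h1).2

lemma xA_not_unit : ¬ IsUnit xA := by
  intro hu
  obtain ⟨b, hb⟩ := hu.exists_right_inv
  obtain ⟨c, d, rfl⟩ := reprA b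
  have h := mulruleA 0 1 c d
  have hxa : psi 0 + psi 1 * xA = xA := by rw [map_zero, map_one, zero_add, one_mul]
  rw [hxa, hb] at h
  have h2 : psi (0 * c - 1 * d * PowerSeries.X ^ 2 - 1)
      + psi (0 * d + c * 1 - 1 * d * PowerSeries.X) * xA = 0 := by
    rw [map_sub, map_one]
    linear_combination -h
  have h3 := (uniqueA _ _ h2).1
  have h4 : PowerSeries.constantCoeff (0 * c - 1 * d * PowerSeries.X ^ 2 - 1) = 0 := by
    rw [h3, map_zero]
  simp [PowerSeries.constantCoeff_X] at h4

lemma quadric_ne_top : Ideal.span {quadricElt} ≠ ⊤ := by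
  rw [Ne, Ideal.span_singleton_eq_top]
  intro hu
  have h0 : MvPowerSeries.constantCoeff (σ := Fin 2) (R := L) quadricElt = 0 := by
    have : MvPowerSeries.constantCoeff (σ := Fin 2) (R := L)
        (MvPowerSeries.X 0 ^ 2 + MvPowerSeries.X 0 * MvPowerSeries.X 1
          + MvPowerSeries.X 1 ^ 2) = 0 := by
      simp [map_add, map_mul, map_pow, MvPowerSeries.constantCoeff_X]
    exact this
  rw [MvPowerSeries.isUnit_iff_constantCoeff, h0] at hu
  exact not_isUnit_zero hu

lemma nontrivialA : Nontrivial (MvPowerSeries (Fin 2) Lfield ⧸ Ideal.span {quadricElt}) :=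
  Ideal.Quotient.nontrivial_iff.mpr quadric_ne_top

lemma noethA : IsNoetherianRing (MvPowerSeries (Fin 2) Lfield ⧸ Ideal.span {quadricElt}) := by
  letI : Algebra S (MvPowerSeries (Fin 2) Lfield ⧸ Ideal.span {quadricElt}) := psi.toAlgebra
  haveI : Module.Finite S (MvPowerSeries (Fin 2) Lfield ⧸ Ideal.span {quadricElt}) := by
    classical
    refine ⟨⟨{1, xA}, le_antisymm le_top ?_⟩⟩
    rintro a -
    obtain ⟨c, d, rfl⟩ := reprA a
    have hsm : psi c + psi d * xA = c • (1 : MvPowerSeries (Fin 2) Lfield ⧸ Ideal.span {quadricElt}) + d • xA := by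
      rw [Algebra.smul_def, Algebra.smul_def, RingHom.algebraMap_toAlgebra, mul_one]
    rw [hsm]
    refine Submodule.add_mem _ (Submodule.smul_mem _ _ ?_) (Submodule.smul_mem _ _ ?_)
    · exact Submodule.subset_span (by simp)
    · exact Submodule.subset_span (by simp)
  exact Algebra.FiniteType.isNoetherianRing S _

lemma localA : IsLocalRing (MvPowerSeries (Fin 2) Lfield ⧸ Ideal.span {quadricElt}) := by
  haveI := nontrivialA
  exact IsLocalRing.of_surjective' (Ideal.Quotient.mk _) Ideal.Quotient.mk_surjective

lemma domainA : IsDomain (MvPowerSeries (Fin 2) Lfield ⧸ Ideal.span {quadricElt}) := by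
  haveI := nontrivialA
  haveI : NoZeroDivisors (MvPowerSeries (Fin 2) Lfield ⧸ Ideal.span {quadricElt}) := by
    constructor
    intro a b hab
    obtain ⟨c1, d1, rfl⟩ := reprA a
    obtain ⟨c2, d2, rfl⟩ := reprA b
    rw [mulruleA] at hab
    obtain ⟨hC, hD⟩ := uniqueA _ _ hab
    have hN : Nr c1 d1 * Nr c2 d2 = 0 := by
      rw [← Nr_mul, hC, hD]
      rw [Nr]; ring
    rcases mul_eq_zero.mp hN with h | h
    · obtain ⟨h1, h2⟩ := Nr_eq_zero h
      left; simp [h1, h2]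
    · obtain ⟨h1, h2⟩ := Nr_eq_zero h
      right; simp [h1, h2]
  exact NoZeroDivisors.to_isDomain _

lemma isMaximal_of_ne_bot (P : Ideal (MvPowerSeries (Fin 2) Lfield ⧸ Ideal.span {quadricElt}))
    [hP : P.IsPrime] (hne : P ≠ ⊥) : P.IsMaximal := by
  obtain ⟨a, haP, ha0⟩ := Submodule.exists_mem_ne_zero_of_ne_bot hne
  obtain ⟨c, d, rfl⟩ := reprA a
  have hprod : psi (Nr c d) ∈ P := by
    rw [← conjA c d]; exact Ideal.mul_mem_right _ _ haP
  have hN0 : Nr c d ≠ 0 := by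
    intro h
    obtain ⟨h1, h2⟩ := Nr_eq_zero h
    exact ha0 (by simp [h1, h2])
  haveI hP0p : (P.comap psi).IsPrime := Ideal.IsPrime.comap psi
  obtain ⟨k, u, hku⟩ :=
    IsDiscreteValuationRing.eq_unit_mul_pow_irreducible hN0 PowerSeries.X_irreducible
  have hXk : (PowerSeries.X : S) ^ k ∈ P.comap psi := by
    have h1 : ((u⁻¹ : Sˣ) : S) * Nr c d ∈ P.comap psi :=
      Ideal.mul_mem_left _ _ hprod
    rwa [hku, ← mul_assoc, Units.inv_mul, one_mul] at h1
  have hk0 : k ≠ 0 := by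
    rintro rfl
    rw [pow_zero] at hXk
    exact hP0p.ne_top (Ideal.eq_top_of_isUnit_mem _ hXk isUnit_one)
  have hXP0 : (PowerSeries.X : S) ∈ P.comap psi := hP0p.mem_of_pow_mem k hXk
  have hyP : yA ∈ P := by rw [← psi_X]; exact hXP0
  have hxP : xA ∈ P := by
    have hx2 : xA ^ 2 ∈ P := by
      have he : xA ^ 2 = -(xA * yA) - yA ^ 2 := by linear_combination hrel
      rw [he, pow_two]
      exact Submodule.sub_mem _ (Submodule.neg_mem _ (Ideal.mul_mem_left _ _ hyP))
        (Ideal.mul_mem_left _ _ hyP)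
    exact hP.mem_of_pow_mem 2 hx2
  apply Ideal.Quotient.maximal_of_isField
  have hsurj : ∀ z : (MvPowerSeries (Fin 2) Lfield ⧸ Ideal.span {quadricElt}) ⧸ P,
      ∃ w : Lfield, Ideal.Quotient.mk P (psi (PowerSeries.C w)) = z := by
    intro z
    obtain ⟨a, rfl⟩ := Ideal.Quotient.mk_surjective z
    obtain ⟨c, d, rfl⟩ := reprA a
    set c0 : Lfield := PowerSeries.constantCoeff c with hc0
    obtain ⟨c', hc'⟩ := PowerSeries.X_dvd_iff.mpr
      (show PowerSeries.constantCoeff 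
        (c - PowerSeries.C c0) = 0 by simp [hc0])
    refine ⟨c0, ?_⟩
    have hc : c = PowerSeries.C c0 + PowerSeries.X * c' := by
      rw [← hc']; ring
    rw [Ideal.Quotient.mk_eq_mk_iff_sub_mem]
    have hdiff : psi (PowerSeries.C c0)
        - (psi c + psi d * xA) = -(yA * psi c') - psi d * xA := by
      rw [hc, map_add, map_mul, psi_X]; ring
    rw [hdiff]
    exact Submodule.sub_mem _ (Submodule.neg_mem _ (Ideal.mul_mem_right _ _ hyP))
      (Ideal.mul_mem_left _ _ hxP)
  refine ⟨?_, fun x y => mul_comm x y, ?_⟩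
  · haveI : Nontrivial ((MvPowerSeries (Fin 2) Lfield ⧸ Ideal.span {quadricElt}) ⧸ P) :=
      Ideal.Quotient.nontrivial_iff.mpr hP.ne_top
    exact exists_pair_ne _
  · intro z hz
    obtain ⟨w, rfl⟩ := hsurj z
    have hw : w ≠ 0 := by
      rintro rfl
      exact hz (by rw [map_zero, map_zero, map_zero])
    refine ⟨Ideal.Quotient.mk P (psi (PowerSeries.C w⁻¹)), ?_⟩
    rw [← map_mul, ← map_mul, ← map_mul, mul_inv_cancel₀ hw, map_one, map_one, map_one]

lemma dimA : ringKrullDim (MvPowerSeries (Fin 2) Lfield ⧸ Ideal.span {quadricElt}) = 1 := by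
  haveI := nontrivialA
  haveI := domainA
  haveI := localA
  set A := MvPowerSeries (Fin 2) Lfield ⧸ Ideal.span {quadricElt}
  let Pbot : PrimeSpectrum A := ⟨⊥, Ideal.bot_prime⟩
  let Pmax : PrimeSpectrum A :=
    ⟨IsLocalRing.maximalIdeal A, (IsLocalRing.maximalIdeal.isMaximal A).isPrime⟩
  have hbotlt : Pbot < Pmax := by
    rw [← PrimeSpectrum.asIdeal_lt_asIdeal]
    refine lt_of_le_of_ne bot_le ?_
    intro h
    have h' : (⊥ : Ideal A) = IsLocalRing.maximalIdeal A := h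
    have hx : xA ∈ IsLocalRing.maximalIdeal A :=
      (IsLocalRing.mem_maximalIdeal xA).mpr xA_not_unit
    rw [← h'] at hx
    exact xA_ne_zero (Submodule.mem_bot _ |>.mp hx)
  apply le_antisymm
  · rw [ringKrullDim, Order.krullDim_eq_iSup_length]
    have hcast : ((1 : ℕ∞) : WithBot ℕ∞) = 1 := rfl
    rw [← hcast]
    rw [WithBot.coe_le_coe]
    refine iSup_le fun p => ?_
    have hlen : p.length ≤ 1 := by
      by_contra hl
      push_neg at hl
      have hl2 : 1 < p.length := hl
      let i0 : Fin (p.length + 1) := ⟨0, by omega⟩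
      let i1 : Fin (p.length + 1) := ⟨1, by omega⟩
      let i2 : Fin (p.length + 1) := ⟨2, by omega⟩
      have h01 : p i0 < p i1 := p.strictMono (by simp [i0, i1, Fin.lt_def])
      have h12 : p i1 < p i2 := p.strictMono (by simp [i1, i2, Fin.lt_def])
      have hne1 : (p i1).asIdeal ≠ ⊥ := by
        intro hb
        have hlt := (PrimeSpectrum.asIdeal_lt_asIdeal _ _).mpr h01
        rw [hb] at hlt
        exact not_lt_bot hlt
      haveI := (p i1).isPrime
      have hmax := isMaximal_of_ne_bot (p i1).asIdeal hne1
      have hlt := (PrimeSpectrum.asIdeal_lt_asIdeal _ _).mpr h12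
      exact hlt.ne (hmax.eq_of_le (p i2).isPrime.ne_top hlt.le)
    exact_mod_cast hlen
  · let series : LTSeries (PrimeSpectrum A) :=
      { length := 1
        toFun := ![Pbot, Pmax]
        step := fun i => by
          fin_cases i
          simpa using hbotlt }
    have h := Order.LTSeries.length_le_krullDim series
    exact_mod_cast h

end Main

end QuadricAux
end

/-- The ring `A = 𝔽₂(t)[[X,Y]]/(X² + XY + Y²)` is a one-dimensional Noetherian local
domain. -/
theorem quadricRing_one_dim_noetherian_local_domain :
    IsNoetherianRing quadricRing ∧ IsLocalRing quadricRing ∧ IsDomain quadricRing ∧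
      ringKrullDim quadricRing = 1 :=
  ⟨QuadricAux.noethA, QuadricAux.localA, QuadricAux.domainA, QuadricAux.dimA⟩
end
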